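/- Let A = {a_0 < a_1 < ... < a_{k−1}} be a set of k integers, r = (r_0,...,r_{k−1}) a k-tuple of positive integers, and h an integer with 2 ≤ h ≤ Σ r_j. Then |h^{(r)}A| ≥ L(r,h), where h^{(r)}A = {Σ s_i a_i : 0 ≤ s_i ≤ r_i, Σ s_i = h} and L(r,h) = Σ_{j=M+1}^{k−1} j·r_j − Σ_{j=0}^{I−1} j·r_j + M·θ − I·δ + 1, with I the largest integer such that Σ_{j=0}^{I−1} r_j ≤ h, M the least integer such that Σ_{j=M+1}^{k−1} r_j ≤ h, δ = h − Σ_{j=0}^{I−1} r_j, and θ = h − Σ_{j=M+1}^{k−1} r_j. -/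

import Mathlib

open Finset

/-- A step `U → W`: some coordinate `j` decreases by 1 and coordinate `j+1` increases by 1. -/
def IsStep (k : ℕ) (U W : ℕ → ℕ) : Prop :=
  ∃ j, j + 1 < k ∧ U j = W j + 1 ∧ W (j + 1) = U (j + 1) + 1 ∧
    ∀ i, i ≠ j → i ≠ j + 1 → W i = U i

/-- Membership in `R(r,h)`: a `k`-tuple of nonnegative integers with `x i ≤ r i` and `∑ x i = h`. -/
def InR (k : ℕ) (r : ℕ → ℕ) (h : ℕ) (x : ℕ → ℕ) : Prop :=
  (∀ i < k, x i ≤ r i) ∧ (∀ i, k ≤ i → x i = 0) ∧ ∑ i ∈ Finset.range k, x i = h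

/-- The general `h`-fold sumset `h^{(r)}A` for `A = {a 0 < a 1 < ⋯ < a (k-1)}`. -/
def genSumset (k : ℕ) (a : ℕ → ℤ) (r : ℕ → ℕ) (h : ℕ) : Set ℤ :=
  {z | ∃ s : ℕ → ℕ, (∀ i < k, s i ≤ r i) ∧ (∑ i ∈ Finset.range k, s i = h) ∧
    z = ∑ i ∈ Finset.range k, (s i : ℤ) * a i}

/-- The quantity `L(r,h)` in terms of `I`, `M`, `δ`, `θ`. -/
def Lval (k I M : ℕ) (r : ℕ → ℕ) (δ θ : ℕ) : ℤ :=
  (∑ j ∈ Finset.Ico (M + 1) k, (j : ℤ) * r j) - (∑ j ∈ Finset.range I, (j : ℤ) * r j)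
    + (M : ℤ) * θ - (I : ℤ) * δ + 1

/-- The weighted sum `S(X) = ∑ j·x j`. -/
def Sw (k : ℕ) (x : ℕ → ℕ) : ℤ := ∑ j ∈ Finset.range k, (j : ℤ) * x j

/-- An `(r,h)`-path of length `t`: `P 1 → P 2 → ⋯ → P t`, all in `R(r,h)`. -/
def IsPath (k : ℕ) (r : ℕ → ℕ) (h t : ℕ) (P : ℕ → ℕ → ℕ) : Prop :=
  (∀ i, 1 ≤ i → i ≤ t → InR k r h (P i)) ∧
  (∀ i, 1 ≤ i → i < t → IsStep k (P i) (P (i + 1)))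

namespace GHLB

noncomputable def mystep (x : ℕ → ℕ) (j : ℕ) : ℕ → ℕ :=
  fun i => if i = j then x j - 1 else if i = j + 1 then x (j + 1) + 1 else x i

open Classical in
noncomputable def mychain (k : ℕ) (r : ℕ → ℕ) (x0 : ℕ → ℕ) : ℕ → ℕ → ℕ
  | 0 => x0
  | n + 1 =>
    if hj : ∃ j, j + 1 < k ∧ 0 < mychain k r x0 n j ∧ mychain k r x0 n (j + 1) < r (j + 1)
    then mystep (mychain k r x0 n) (Classical.choose hj) else mychain k r x0 n

lemma double_sum (f : ℕ → ℤ) (m : ℕ) : ∀ n, (∑ t ∈ Ico m n, ∑ j ∈ Ico (t + 1) n, f j)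
    = ∑ j ∈ Ico (m + 1) n, ((j : ℤ) - (m : ℤ)) * f j
  | 0 => by simp
  | (n + 1) => by
    rcases le_or_gt m n with hmn | hmn
    · rw [Finset.sum_Ico_succ_top hmn,
        Finset.sum_congr rfl (fun t ht => Finset.sum_Ico_succ_top
          (by simp only [Finset.mem_Ico] at ht; omega) _),
        Finset.sum_add_distrib, double_sum f m n, Finset.sum_const, Nat.card_Ico]
      rcases eq_or_lt_of_le hmn with rfl | hmn'
      · simp
      · rw [Finset.sum_Ico_succ_top (by omega : m + 1 ≤ n)]
        simp only [Finset.Ico_self, Finset.sum_empty, add_zero, nsmul_eq_mul]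
        push_cast [hmn]
        ring
    · rw [Finset.Ico_eq_empty (by omega), Finset.Ico_eq_empty (by omega)]
      simp

lemma Sw_eq_tails (k : ℕ) (x : ℕ → ℕ) :
    Sw k x = ∑ t ∈ range k, ∑ j ∈ Ico (t + 1) k, (x j : ℤ) := by
  have h2 := double_sum (fun j => (x j : ℤ)) 0 k
  rw [Sw, Finset.range_eq_Ico, h2]
  rcases Nat.eq_zero_or_pos k with rfl | hk
  · simp
  · rw [Finset.sum_eq_sum_Ico_succ_bot hk (f := fun j => (j : ℤ) * (x j : ℤ))]
    simp

lemma Sw_le {k h M θ : ℕ} {r x : ℕ → ℕ}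
    (hM2 : ∀ M', (∑ j ∈ Ico (M' + 1) k, r j ≤ h) → M ≤ M')
    (hθ : (θ : ℤ) = (h : ℤ) - ∑ j ∈ Ico (M + 1) k, (r j : ℤ))
    (hx : InR k r h x) :
    Sw k x ≤ (M : ℤ) * θ + ∑ j ∈ Ico (M + 1) k, (j : ℤ) * r j := by
  obtain ⟨hxr, hx0, hxs⟩ := hx
  have hMk : M ≤ k := hM2 k (by simp)
  have tail_le_h : ∀ t, (∑ j ∈ Ico (t + 1) k, (x j : ℤ)) ≤ h := by
    intro t
    have h1 : ∑ j ∈ Ico (t + 1) k, x j ≤ ∑ j ∈ range k, x j := by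
      apply Finset.sum_le_sum_of_subset
      rw [Finset.range_eq_Ico]; exact Finset.Ico_subset_Ico (by omega) le_rfl
    rw [hxs] at h1
    exact_mod_cast h1
  have tail_le_r : ∀ t, (∑ j ∈ Ico (t + 1) k, (x j : ℤ)) ≤ ∑ j ∈ Ico (t + 1) k, (r j : ℤ) := by
    intro t
    apply Finset.sum_le_sum
    intro j hj
    simp only [Finset.mem_Ico] at hj
    exact_mod_cast hxr j hj.2
  rw [Sw_eq_tails]
  have hsplit : (∑ t ∈ range k, ∑ j ∈ Ico (t + 1) k, (x j : ℤ))
      = (∑ t ∈ Ico 0 M, ∑ j ∈ Ico (t + 1) k, (x j : ℤ))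
        + ∑ t ∈ Ico M k, ∑ j ∈ Ico (t + 1) k, (x j : ℤ) := by
    rw [Finset.range_eq_Ico, Finset.sum_Ico_consecutive _ (Nat.zero_le M) hMk]
  rw [hsplit]
  have h1 : (∑ t ∈ Ico 0 M, ∑ j ∈ Ico (t + 1) k, (x j : ℤ)) ≤ (M : ℤ) * h := by
    calc (∑ t ∈ Ico 0 M, ∑ j ∈ Ico (t + 1) k, (x j : ℤ))
        ≤ ∑ _t ∈ Ico 0 M, (h : ℤ) := Finset.sum_le_sum (fun t _ => tail_le_h t)
      _ = (M : ℤ) * h := by simp [mul_comm]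
  have h2 : (∑ t ∈ Ico M k, ∑ j ∈ Ico (t + 1) k, (x j : ℤ))
      ≤ ∑ t ∈ Ico M k, ∑ j ∈ Ico (t + 1) k, (r j : ℤ) :=
    Finset.sum_le_sum (fun t _ => tail_le_r t)
  have h3 := double_sum (fun j => (r j : ℤ)) M k
  have h4 : (∑ j ∈ Ico (M + 1) k, ((j : ℤ) - (M : ℤ)) * (r j : ℤ))
      = (∑ j ∈ Ico (M + 1) k, (j : ℤ) * r j) - (M : ℤ) * ∑ j ∈ Ico (M + 1) k, (r j : ℤ) := by
    rw [Finset.mul_sum, ← Finset.sum_sub_distrib]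
    exact Finset.sum_congr rfl (fun j _ => by ring)
  have hθ' : (M : ℤ) * θ = (M : ℤ) * h - (M : ℤ) * ∑ j ∈ Ico (M + 1) k, (r j : ℤ) := by
    rw [hθ]; ring
  linarith [h1, h2, h3, h4, hθ']

lemma no_step_Sw {k h M θ : ℕ} {r x : ℕ → ℕ} (hr : ∀ j < k, 0 < r j) (hh : 0 < h)
    (hM2 : ∀ M', (∑ j ∈ Ico (M' + 1) k, r j ≤ h) → M ≤ M')
    (hθ : (θ : ℤ) = (h : ℤ) - ∑ j ∈ Ico (M + 1) k, (r j : ℤ))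
    (hx : InR k r h x)
    (hno : ∀ j, j + 1 < k → 0 < x j → r (j + 1) ≤ x (j + 1)) :
    (M : ℤ) * θ + (∑ j ∈ Ico (M + 1) k, (j : ℤ) * r j) ≤ Sw k x := by
  classical
  obtain ⟨hxr, hx0, hxs⟩ := hx
  have hex : ∃ m, 0 < x m := by
    by_contra hc
    push_neg at hc
    have : ∑ i ∈ range k, x i = 0 := Finset.sum_eq_zero (fun i _ => by have := hc i; omega)
    omega
  obtain ⟨m, hm, hmmin⟩ : ∃ m, 0 < x m ∧ ∀ i < m, x i = 0 :=
    ⟨Nat.find hex, Nat.find_spec hex, fun i hi => by have := Nat.find_min hex hi; omega⟩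
  have hmk : m < k := by
    by_contra hc
    push_neg at hc
    have := hx0 m hc
    omega
  have full : ∀ d, m + 1 + d < k → x (m + 1 + d) = r (m + 1 + d) := by
    intro d
    induction d with
    | zero =>
      intro hd
      simp only [Nat.add_zero]
      simp only [Nat.add_zero] at hd
      have h1 := hno m hd hm
      have h2 := hxr (m + 1) hd
      omega
    | succ d ih =>
      intro hd
      have hd' : m + 1 + d < k := by omega
      have h1 := ih hd'
      have h2 : 0 < x (m + 1 + d) := by rw [h1]; exact hr _ hd'
      have h3 := hno (m + 1 + d) (by omega) h2
      have h4 := hxr (m + 1 + d + 1) (by omega)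
      have h5 : x (m + 1 + d + 1) = r (m + 1 + d + 1) := by omega
      exact h5
  have full' : ∀ j, m < j → j < k → x j = r j := by
    intro j h1 h2
    obtain ⟨d, rfl⟩ : ∃ d, j = m + 1 + d := ⟨j - (m + 1), by omega⟩
    exact full d h2
  have hsum : x m + ∑ j ∈ Ico (m + 1) k, r j = h := by
    have e1 : ∑ j ∈ Ico 0 m, x j = 0 :=
      Finset.sum_eq_zero (fun j hj => hmmin j (Finset.mem_Ico.mp hj).2)
    have e2 : ∑ j ∈ Ico (m + 1) k, x j = ∑ j ∈ Ico (m + 1) k, r j :=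
      Finset.sum_congr rfl (fun j hj => by
        have hj' := Finset.mem_Ico.mp hj
        exact full' j (by omega) hj'.2)
    have e3 : ∑ j ∈ Ico 0 k, x j = h := by rw [← Finset.range_eq_Ico]; exact hxs
    rw [← Finset.sum_Ico_consecutive _ (Nat.zero_le m) (le_of_lt hmk),
      Finset.sum_eq_sum_Ico_succ_bot hmk] at e3
    omega
  have hMm : M ≤ m := hM2 m (by omega)
  have hSw : Sw k x = (m : ℤ) * x m + ∑ j ∈ Ico (m + 1) k, (j : ℤ) * r j := by
    rw [Sw, Finset.range_eq_Ico, ← Finset.sum_Ico_consecutive _ (Nat.zero_le m) (le_of_lt hmk),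
      Finset.sum_eq_sum_Ico_succ_bot hmk]
    have e1 : ∑ j ∈ Ico 0 m, (j : ℤ) * x j = 0 := Finset.sum_eq_zero (fun j hj => by
      rw [hmmin j (Finset.mem_Ico.mp hj).2]; simp)
    have e2 : ∑ j ∈ Ico (m + 1) k, (j : ℤ) * x j = ∑ j ∈ Ico (m + 1) k, (j : ℤ) * r j :=
      Finset.sum_congr rfl (fun j hj => by
        have hj' := Finset.mem_Ico.mp hj
        rw [full' j (by omega) hj'.2])
    rw [e1, e2]; ring
  rw [hSw]
  have hsZ : (x m : ℤ) + ∑ j ∈ Ico (m + 1) k, (r j : ℤ) = (h : ℤ) := by exact_mod_cast hsum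
  rcases eq_or_lt_of_le hMm with rfl | hMm'
  · -- M = m
    have hθx : (θ : ℤ) = (x M : ℤ) := by linarith [hθ, hsZ]
    rw [hθx]
  · -- M < m
    have hsplit : ∑ j ∈ Ico (M + 1) k, (r j : ℤ)
        = (∑ j ∈ Ico (M + 1) (m + 1), (r j : ℤ)) + ∑ j ∈ Ico (m + 1) k, (r j : ℤ) :=
      (Finset.sum_Ico_consecutive _ (by omega) (by omega)).symm
    have hθ2 : (θ : ℤ) = (x m : ℤ) - ∑ j ∈ Ico (M + 1) (m + 1), (r j : ℤ) := by
      rw [hθ, hsplit]; linarith [hsZ]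
    have hA : ∑ j ∈ Ico (M + 1) (m + 1), (r j : ℤ)
        = (∑ j ∈ Ico (M + 1) m, (r j : ℤ)) + (r m : ℤ) :=
      Finset.sum_Ico_succ_top (by omega) _
    have hxm : (x m : ℤ) ≤ (r m : ℤ) := by exact_mod_cast hxr m hmk
    have hθ0 : (0 : ℤ) ≤ (θ : ℤ) := Int.natCast_nonneg θ
    have hm1 : m = M + 1 := by
      by_contra hc
      have hne : M + 1 < m := by omega
      have hle : (r (M + 1) : ℤ) ≤ ∑ j ∈ Ico (M + 1) m, (r j : ℤ) :=
        Finset.single_le_sum (f := fun j => (r j : ℤ)) (fun j _ => Int.natCast_nonneg _)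
          (Finset.mem_Ico.mpr ⟨le_rfl, hne⟩)
      have hpos : 0 < r (M + 1) := hr _ (by omega)
      have hpos' : (0 : ℤ) < (r (M + 1) : ℤ) := by exact_mod_cast hpos
      linarith
    subst hm1
    have hA2 : ∑ j ∈ Ico (M + 1) (M + 1 + 1), (r j : ℤ) = (r (M + 1) : ℤ) := by
      rw [Finset.sum_Ico_succ_top le_rfl]; simp
    have hθ3 : (θ : ℤ) = (x (M + 1) : ℤ) - (r (M + 1) : ℤ) := by rw [hθ2, hA2]
    have hθ4 : (θ : ℤ) = 0 := le_antisymm (by linarith) hθ0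
    have hxr' : (x (M + 1) : ℤ) = (r (M + 1) : ℤ) := by linarith
    have hsplit2 : ∑ j ∈ Ico (M + 1) k, (j : ℤ) * (r j : ℤ)
        = ((M + 1 : ℕ) : ℤ) * (r (M + 1) : ℤ) + ∑ j ∈ Ico (M + 1 + 1) k, (j : ℤ) * (r j : ℤ) := by
      rw [Finset.sum_eq_sum_Ico_succ_bot hmk]
    rw [hθ4, hsplit2, hxr']
    push_cast
    linarith

lemma step_sum (n j : ℕ) (hjn : j + 1 < n) {x : ℕ → ℕ} (hxj : 0 < x j) (f : ℕ → ℤ) :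
    ∑ i ∈ range n, f i * (mystep x j i : ℤ)
      = (∑ i ∈ range n, f i * (x i : ℤ)) + (f (j + 1) - f j) := by
  have hsub : ({j, j + 1} : Finset ℕ) ⊆ range n := by
    intro i hi
    simp only [Finset.mem_insert, Finset.mem_singleton] at hi
    rcases hi with rfl | rfl <;> simp only [Finset.mem_range] <;> omega
  have hzero : ∀ i ∈ range n, i ∉ ({j, j + 1} : Finset ℕ) →
      f i * (mystep x j i : ℤ) - f i * (x i : ℤ) = 0 := by
    intro i _ hni
    simp only [Finset.mem_insert, Finset.mem_singleton] at hni
    push_neg at hni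
    have : mystep x j i = x i := by
      simp only [mystep, if_neg hni.1, if_neg hni.2]
    rw [this]; ring
  have key : ∑ i ∈ range n, (f i * (mystep x j i : ℤ) - f i * (x i : ℤ)) = f (j + 1) - f j := by
    rw [← Finset.sum_subset hsub hzero, Finset.sum_pair (by omega : j ≠ j + 1)]
    have e1n : mystep x j j = x j - 1 := by simp [mystep]
    have e2n : mystep x j (j + 1) = x (j + 1) + 1 := by simp [mystep]
    have e1 : (mystep x j j : ℤ) = (x j : ℤ) - 1 := by
      rw [e1n, Nat.cast_sub (by omega : 1 ≤ x j)]
      simp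
    have e2 : (mystep x j (j + 1) : ℤ) = (x (j + 1) : ℤ) + 1 := by
      rw [e2n]; push_cast; ring
    rw [e1, e2]; ring
  rw [Finset.sum_sub_distrib] at key
  linarith [key]

lemma step_InR {k h : ℕ} {r x : ℕ → ℕ} (hx : InR k r h x) {j : ℕ} (hj : j + 1 < k)
    (h1 : 0 < x j) (h2 : x (j + 1) < r (j + 1)) : InR k r h (mystep x j) := by
  obtain ⟨hxr, hx0, hxs⟩ := hx
  refine ⟨?_, ?_, ?_⟩
  · intro i hik
    by_cases e1 : i = j
    · rw [e1, show mystep x j j = x j - 1 from by simp [mystep]]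
      exact le_trans (Nat.sub_le _ _) (hxr _ (e1 ▸ hik))
    by_cases e2 : i = j + 1
    · rw [e2, show mystep x j (j + 1) = x (j + 1) + 1 from by simp [mystep]]
      omega
    · simp only [mystep, if_neg e1, if_neg e2]
      exact hxr _ hik
  · intro i hik
    have e1 : i ≠ j := by omega
    have e2 : i ≠ j + 1 := by omega
    simp only [mystep, if_neg e1, if_neg e2]
    exact hx0 _ hik
  · have hs := step_sum k j hj h1 (fun _ => (1 : ℤ))
    simp only [one_mul, sub_self, add_zero] at hs
    have hZ : ∑ i ∈ range k, mystep x j i = ∑ i ∈ range k, x i := by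
      have : ((∑ i ∈ range k, mystep x j i : ℕ) : ℤ) = ((∑ i ∈ range k, x i : ℕ) : ℤ) := by
        push_cast
        exact hs
      exact_mod_cast this
    rw [hZ]; exact hxs

end GHLB

theorem general_hfold_lower_bound (k h I M δ θ : ℕ) (a : ℕ → ℤ) (r : ℕ → ℕ)
    (ha : ∀ i j, i < j → j < k → a i < a j)
    (hr : ∀ j < k, 0 < r j)
    (hh2 : 2 ≤ h) (hhk : h ≤ ∑ j ∈ Finset.range k, r j)
    (hIk : I ≤ k)
    (hI1 : ∑ j ∈ Finset.range I, r j ≤ h)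
    (hI2 : ∀ I' ≤ k, (∑ j ∈ Finset.range I', r j ≤ h) → I' ≤ I)
    (hM1 : ∑ j ∈ Finset.Ico (M + 1) k, r j ≤ h)
    (hM2 : ∀ M', (∑ j ∈ Finset.Ico (M' + 1) k, r j ≤ h) → M ≤ M')
    (hδ : (δ : ℤ) = (h : ℤ) - ∑ j ∈ Finset.range I, (r j : ℤ))
    (hθ : (θ : ℤ) = (h : ℤ) - ∑ j ∈ Finset.Ico (M + 1) k, (r j : ℤ)) :
    Lval k I M r δ θ ≤ ((genSumset k a r h).ncard : ℤ) := by

  classical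
  have hk : 0 < k := by
    rcases Nat.eq_zero_or_pos k with rfl | hpos
    · simp at hhk; omega
    · exact hpos
  have hhkZ : (h : ℤ) ≤ ∑ j ∈ Finset.range k, (r j : ℤ) := by exact_mod_cast hhk
  set Xmin : ℕ → ℕ := fun j => if j < I then r j else if j = I then δ else 0 with hXmin_def
  have hδ0 : I = k → δ = 0 := by
    intro hIk'
    have h1 : (δ : ℤ) ≤ 0 := by rw [hδ, hIk']; linarith
    have h2 : (0 : ℤ) ≤ (δ : ℤ) := Int.natCast_nonneg δ
    exact_mod_cast le_antisymm h1 h2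
  have hδr : I < k → δ ≤ r I := by
    intro hIk'
    by_contra hc
    push_neg at hc
    have h2 : ((∑ j ∈ Finset.range I, r j : ℕ) : ℤ) + (δ : ℤ) = (h : ℤ) := by
      push_cast
      linarith [hδ]
    have h1 : ∑ j ∈ Finset.range (I + 1), r j ≤ h := by
      rw [Finset.sum_range_succ]
      omega
    have := hI2 (I + 1) (by omega) h1
    omega
  have hXminInR : InR k r h Xmin := by
    refine ⟨?_, ?_, ?_⟩
    · intro i hik
      simp only [hXmin_def]
      split_ifs with h1 h2
      · exact le_rfl
      · rw [h2]; exact hδr (h2 ▸ hik)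
      · exact Nat.zero_le _
    · intro i hik
      simp only [hXmin_def]
      split_ifs with h1 h2
      · omega
      · exact hδ0 (by omega)
      · rfl
    · rcases eq_or_lt_of_le hIk with rfl | hIk'
      · have hd0 := hδ0 rfl
        have e1 : ∑ j ∈ Finset.range I, Xmin j = ∑ j ∈ Finset.range I, r j :=
          Finset.sum_congr rfl (fun j hj => by
            simp only [hXmin_def]; rw [if_pos (Finset.mem_range.mp hj)])
        rw [e1]
        have h2 : (h : ℤ) = ((∑ j ∈ Finset.range I, r j : ℕ) : ℤ) := by
          have := hδ
          rw [hd0] at this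
          push_cast
          push_cast at this
          linarith
        exact_mod_cast h2.symm
      · rw [Finset.range_eq_Ico,
          ← Finset.sum_Ico_consecutive _ (Nat.zero_le I) (le_of_lt hIk'),
          Finset.sum_eq_sum_Ico_succ_bot hIk']
        have e1 : ∑ j ∈ Finset.Ico 0 I, Xmin j = ∑ j ∈ Finset.Ico 0 I, r j :=
          Finset.sum_congr rfl (fun j hj => by
            simp only [hXmin_def]; rw [if_pos (Finset.mem_Ico.mp hj).2])
        have e2 : Xmin I = δ := by simp [hXmin_def]
        have e3 : ∑ j ∈ Finset.Ico (I + 1) k, Xmin j = 0 :=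
          Finset.sum_eq_zero (fun j hj => by
            have hj' := Finset.mem_Ico.mp hj
            simp only [hXmin_def]
            rw [if_neg (by omega), if_neg (by omega)])
        rw [e1, e2, e3]
        have h2 : ((∑ j ∈ Finset.range I, r j : ℕ) : ℤ) + (δ : ℤ) = (h : ℤ) := by
          push_cast
          linarith [hδ]
        rw [← Finset.range_eq_Ico]
        omega
  have hSwmin : Sw k Xmin = (I : ℤ) * δ + ∑ j ∈ Finset.range I, (j : ℤ) * r j := by
    rcases eq_or_lt_of_le hIk with rfl | hIk'
    · have hd0 := hδ0 rfl
      rw [Sw]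
      have e1 : ∑ j ∈ Finset.range I, (j : ℤ) * (Xmin j : ℤ)
          = ∑ j ∈ Finset.range I, (j : ℤ) * (r j : ℤ) :=
        Finset.sum_congr rfl (fun j hj => by
          simp only [hXmin_def]; rw [if_pos (Finset.mem_range.mp hj)])
      rw [e1, hd0]
      push_cast
      ring
    · rw [Sw, Finset.range_eq_Ico,
        ← Finset.sum_Ico_consecutive _ (Nat.zero_le I) (le_of_lt hIk'),
        Finset.sum_eq_sum_Ico_succ_bot hIk']
      have e1 : ∑ j ∈ Finset.Ico 0 I, (j : ℤ) * (Xmin j : ℤ)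
          = ∑ j ∈ Finset.Ico 0 I, (j : ℤ) * (r j : ℤ) :=
        Finset.sum_congr rfl (fun j hj => by
          simp only [hXmin_def]; rw [if_pos (Finset.mem_Ico.mp hj).2])
      have e2 : (Xmin I : ℤ) = (δ : ℤ) := by simp [hXmin_def]
      have e3 : ∑ j ∈ Finset.Ico (I + 1) k, (j : ℤ) * (Xmin j : ℤ) = 0 :=
        Finset.sum_eq_zero (fun j hj => by
          have hj' := Finset.mem_Ico.mp hj
          simp only [hXmin_def]
          rw [if_neg (by omega), if_neg (by omega)]
          simp)
      rw [e1, e2, e3, ← Finset.range_eq_Ico]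
      ring
  have hSmaxSmin : (I : ℤ) * δ + (∑ j ∈ Finset.range I, (j : ℤ) * r j)
      ≤ (M : ℤ) * θ + ∑ j ∈ Finset.Ico (M + 1) k, (j : ℤ) * r j := by
    rw [← hSwmin]
    exact GHLB.Sw_le hM2 hθ hXminInR
  set N : ℕ := ((M : ℤ) * θ + (∑ j ∈ Finset.Ico (M + 1) k, (j : ℤ) * r j)
      - ((I : ℤ) * δ + ∑ j ∈ Finset.range I, (j : ℤ) * r j)).toNat with hNdef
  have hN : (N : ℤ) = (M : ℤ) * θ + (∑ j ∈ Finset.Ico (M + 1) k, (j : ℤ) * r j)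
      - ((I : ℤ) * δ + ∑ j ∈ Finset.range I, (j : ℤ) * r j) := by
    rw [hNdef]
    exact Int.toNat_of_nonneg (by linarith)
  have key : ∀ n, n ≤ N → InR k r h (GHLB.mychain k r Xmin n) ∧
      Sw k (GHLB.mychain k r Xmin n)
        = ((I : ℤ) * δ + ∑ j ∈ Finset.range I, (j : ℤ) * r j) + n := by
    intro n
    induction n with
    | zero =>
      intro _
      refine ⟨hXminInR, ?_⟩
      rw [show GHLB.mychain k r Xmin 0 = Xmin from rfl, hSwmin]
      simp
    | succ n ih =>
      intro hn1
      obtain ⟨hIn, hSn⟩ := ih (by omega)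
      have hnN : (n : ℤ) < (N : ℤ) := by exact_mod_cast (by omega : n < N)
      have hlt : Sw k (GHLB.mychain k r Xmin n)
          < (M : ℤ) * θ + ∑ j ∈ Finset.Ico (M + 1) k, (j : ℤ) * r j := by
        rw [hSn]; linarith [hN]
      have hex : ∃ j, j + 1 < k ∧ 0 < GHLB.mychain k r Xmin n j ∧
          GHLB.mychain k r Xmin n (j + 1) < r (j + 1) := by
        by_contra hc2
        push_neg at hc2
        have := GHLB.no_step_Sw hr (by omega) hM2 hθ hIn (fun j hj hp => hc2 j hj hp)
        linarith
      have hch : GHLB.mychain k r Xmin (n + 1)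
          = GHLB.mystep (GHLB.mychain k r Xmin n) (Classical.choose hex) := by
        rw [GHLB.mychain, dif_pos hex]
      obtain ⟨hj1, hj2, hj3⟩ := Classical.choose_spec hex
      refine ⟨by rw [hch]; exact GHLB.step_InR hIn hj1 hj2 hj3, ?_⟩
      have hss := GHLB.step_sum k (Classical.choose hex) hj1 hj2 (fun i => (i : ℤ))
      rw [hch, Sw, hss]
      rw [Sw] at hSn
      rw [hSn]
      push_cast
      ring
  set zf : ℕ → ℤ := fun n => ∑ i ∈ Finset.range k, (GHLB.mychain k r Xmin n i : ℤ) * a i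
    with hzf
  have mono : ∀ n, n < N → zf n < zf (n + 1) := by
    intro n hn
    obtain ⟨hIn, hSn⟩ := key n (le_of_lt hn)
    have hnN : (n : ℤ) < (N : ℤ) := by exact_mod_cast hn
    have hlt : Sw k (GHLB.mychain k r Xmin n)
        < (M : ℤ) * θ + ∑ j ∈ Finset.Ico (M + 1) k, (j : ℤ) * r j := by
      rw [hSn]; linarith [hN]
    have hex : ∃ j, j + 1 < k ∧ 0 < GHLB.mychain k r Xmin n j ∧
        GHLB.mychain k r Xmin n (j + 1) < r (j + 1) := by
      by_contra hc2
      push_neg at hc2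
      have := GHLB.no_step_Sw hr (by omega) hM2 hθ hIn (fun j hj hp => hc2 j hj hp)
      linarith
    have hch : GHLB.mychain k r Xmin (n + 1)
        = GHLB.mystep (GHLB.mychain k r Xmin n) (Classical.choose hex) := by
      rw [GHLB.mychain, dif_pos hex]
    obtain ⟨hj1, hj2, hj3⟩ := Classical.choose_spec hex
    have hss := GHLB.step_sum k (Classical.choose hex) hj1 hj2 a
    have comm : ∀ y : ℕ → ℕ, (∑ i ∈ Finset.range k, (y i : ℤ) * a i)
        = ∑ i ∈ Finset.range k, a i * (y i : ℤ) :=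
      fun y => Finset.sum_congr rfl (fun i _ => mul_comm _ _)
    have hstrict : a (Classical.choose hex) < a (Classical.choose hex + 1) :=
      ha _ _ (by omega) hj1
    simp only [hzf]
    rw [hch, comm, comm, hss]
    linarith
  have sm : ∀ q, q ≤ N → ∀ p, p < q → zf p < zf q := by
    intro q
    induction q with
    | zero => intro _ p hp; omega
    | succ q ih =>
      intro hq p hp
      have hlast : zf q < zf (q + 1) := mono q (by omega)
      rcases Nat.lt_or_ge p q with h' | h'
      · exact lt_trans (ih (by omega) p h') hlast
      · have : p = q := by omega
        rw [this]
        exact hlast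
  have zmem : ∀ n, n ≤ N → zf n ∈ genSumset k a r h := by
    intro n hn
    obtain ⟨⟨hb, hz0, hsum⟩, _⟩ := key n hn
    exact ⟨GHLB.mychain k r Xmin n, hb, hsum, rfl⟩
  have hfin : (genSumset k a r h).Finite := by
    have hsubr : genSumset k a r h ⊆ Set.range
        (fun s : (∀ i : Fin k, Fin (r i + 1)) =>
          ∑ i ∈ Finset.range k, (if hi : i < k then ((s ⟨i, hi⟩ : ℕ) : ℤ) else 0) * a i) := by
      rintro z ⟨s, hs1, _, rfl⟩
      refine ⟨fun i => ⟨s i, Nat.lt_succ_of_le (hs1 i i.2)⟩, ?_⟩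
      refine Finset.sum_congr rfl (fun i hi => ?_)
      rw [dif_pos (Finset.mem_range.mp hi)]
    exact Set.Finite.subset (Set.finite_range _) hsubr
  have hinj : Set.InjOn zf ↑(Finset.range (N + 1)) := by
    intro p hp q hq hpq
    simp only [Finset.coe_range, Set.mem_Iio] at hp hq
    by_contra hne
    rcases Nat.lt_or_ge p q with hlt | hge
    · exact absurd hpq (ne_of_lt (sm q (by omega) p hlt))
    · have hqp : q < p := by omega
      exact absurd hpq.symm (ne_of_lt (sm p (by omega) q hqp))
  have hcard : ((Finset.range (N + 1)).image zf).card = N + 1 := by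
    rw [Finset.card_image_of_injOn hinj, Finset.card_range]
  have hsub : ↑((Finset.range (N + 1)).image zf) ⊆ genSumset k a r h := by
    intro t ht
    simp only [Finset.coe_image, Set.mem_image, Finset.mem_coe, Finset.mem_range] at ht
    obtain ⟨n, hn, rfl⟩ := ht
    exact zmem n (by omega)
  have hle : (((Finset.range (N + 1)).image zf).card : ℤ)
      ≤ ((genSumset k a r h).ncard : ℤ) := by
    have h1 := Set.ncard_le_ncard hsub hfin
    rw [Set.ncard_coe_finset] at h1
    exact_mod_cast h1
  have hLv : Lval k I M r δ θ
      = ((M : ℤ) * θ + ∑ j ∈ Finset.Ico (M + 1) k, (j : ℤ) * r j)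
        - ((I : ℤ) * δ + ∑ j ∈ Finset.range I, (j : ℤ) * r j) + 1 := by
    rw [Lval]; ring
  rw [hLv]
  rw [hcard] at hle
  push_cast at hle
  linarith [hN, hle]
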